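/- Let a be a point of P^2(\bar{F}_q) with Frobenius orbit of size 7. If {a, F^2(a), F^4(a)} are collinear, then the entire orbit {a, F(a), ..., F^6(a)} lies on a single F-invariant line. -/

import Mathlib

open Projectivization
open scoped LinearAlgebra.Projectivization

variable {K : Type} [Field K]

/-- The projective plane over `K`, as the projectivization of `K^3`. -/
abbrev Pt (K : Type) [Field K] := ℙ K (Fin 3 → K)

/-- Lines in the projective plane over `K`: projectivized nonzero linear forms. -/
abbrev Ln (K : Type) [Field K] := ℙ K ((Fin 3 → K) →ₗ[K] K)

/-- Incidence: the point lies on the line. -/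
def OnLine (x : Pt K) (ℓ : Ln K) : Prop := ℓ.rep x.rep = 0

/-- Three points are collinear: some nonzero linear form vanishes on all of them. -/
def Collinear3 (a b c : Pt K) : Prop :=
  ∃ f : (Fin 3 → K) →ₗ[K] K, f ≠ 0 ∧ f a.rep = 0 ∧ f b.rep = 0 ∧ f c.rep = 0

/-- The map on the projective plane induced by `x ↦ x ^ q` on coordinates. -/
noncomputable def Frob (q : ℕ) (x : Pt K) : Pt K :=
  if hq : q = 0 then x else
  Projectivization.mk K (fun i => x.rep i ^ q) (by
    intro h
    apply x.rep_nonzero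
    funext i
    have hi := congrFun h i
    simpa using (pow_eq_zero_iff hq).mp (by simpa using hi))

/-- The algebraic closure of the field with `p ^ n` elements. -/
abbrev Kbar (p n : ℕ) [Fact p.Prime] := AlgebraicClosure (GaloisField p n)

/- ### Auxiliary lemmas -/

/-- If a nonzero linear form exists vanishing on two linearly independent vectors, any other
form vanishing on them is proportional to it. -/
lemma aux_prop_of_two_zeros {f g : (Fin 3 → K) →ₗ[K] K} {v w : Fin 3 → K}
    (hf : f ≠ 0) (hind : LinearIndependent K ![v, w])
    (hfv : f v = 0) (hfw : f w = 0) (hgv : g v = 0) (hgw : g w = 0) :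
    ∃ c : K, g = c • f := by
  obtain ⟨u, hu⟩ : ∃ u, f u ≠ 0 := by
    by_contra hc; push_neg at hc; exact hf (LinearMap.ext fun x => by simp [hc x])
  have hker : LinearMap.ker f ≤ LinearMap.ker g := by
    have h1 : Submodule.span K (Set.range ![v, w]) ≤ LinearMap.ker f := by
      rw [Submodule.span_le]
      rintro x ⟨i, rfl⟩
      fin_cases i <;> simp [LinearMap.mem_ker, hfv, hfw]
    have h2 : Submodule.span K (Set.range ![v, w]) ≤ LinearMap.ker g := by
      rw [Submodule.span_le]
      rintro x ⟨i, rfl⟩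
      fin_cases i <;> simp [LinearMap.mem_ker, hgv, hgw]
    have heq : Submodule.span K (Set.range ![v, w]) = LinearMap.ker f := by
      apply Submodule.eq_of_le_of_finrank_le h1
      have hsp : Module.finrank K (Submodule.span K (Set.range ![v, w])) = 2 := by
        rw [finrank_span_eq_card hind]; simp
      have hr : LinearMap.range f = ⊤ := by
        rw [LinearMap.range_eq_top]
        intro c
        exact ⟨(c / f u) • u, by rw [map_smul, smul_eq_mul, div_mul_cancel₀ _ hu]⟩
      have hrn := LinearMap.finrank_range_add_finrank_ker f
      rw [hr] at hrn
      simp only [finrank_top, Module.finrank_fin_fun, Module.finrank_self] at hrn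
      omega
    rw [← heq]; exact h2
  refine ⟨g u / f u, ?_⟩
  refine LinearMap.ext fun x => ?_
  have hx : x - (f x / f u) • u ∈ LinearMap.ker f := by
    simp only [LinearMap.mem_ker, map_sub, map_smul, smul_eq_mul]
    field_simp; simp
  have hgx := hker hx
  simp only [LinearMap.mem_ker, map_sub, map_smul, smul_eq_mul, sub_eq_zero] at hgx
  simp only [LinearMap.smul_apply, smul_eq_mul]
  rw [hgx]; ring

/-- Distinct projective points have linearly independent representatives. -/
lemma aux_indep_of_ne {x y : Pt K} (hxy : x ≠ y) : LinearIndependent K ![x.rep, y.rep] := by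
  rw [linearIndependent_fin2]
  refine ⟨by simpa using y.rep_nonzero, fun c hc => hxy ?_⟩
  rw [← x.mk_rep, ← y.mk_rep]
  exact (mk_eq_mk_iff' K _ _ x.rep_nonzero y.rep_nonzero).2 ⟨c, by simpa using hc⟩

/-- Vanishing of a form at a point is independent of the representative. -/
lemma aux_vanish_mk (f : (Fin 3 → K) →ₗ[K] K) (v : Fin 3 → K) (hv : v ≠ 0) :
    f ((Projectivization.mk K v hv).rep) = 0 ↔ f v = 0 := by
  obtain ⟨c, hc⟩ := exists_smul_eq_mk_rep K v hv
  rw [← hc, Units.smul_def, map_smul, smul_eq_mul, mul_eq_zero]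
  exact or_iff_right c.ne_zero

/-- The semilinear twist of a linear form by a field automorphism. -/
noncomputable def Tw (e : K ≃+* K) (f : (Fin 3 → K) →ₗ[K] K) : (Fin 3 → K) →ₗ[K] K where
  toFun v := e (f (fun i => e.symm (v i)))
  map_add' x y := by
    show e (f fun i => e.symm ((x + y) i)) =
      e (f fun i => e.symm (x i)) + e (f fun i => e.symm (y i))
    have h : (fun i => e.symm ((x + y) i)) = (fun i => e.symm (x i)) + (fun i => e.symm (y i)) := by
      funext i; simp
    rw [h, map_add, map_add]
  map_smul' c v := by
    show e (f fun i => e.symm ((c • v) i)) = c • e (f fun i => e.symm (v i))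
    have h : (fun i => e.symm ((c • v) i)) = e.symm c • fun i => e.symm (v i) := by
      funext i; simp [Pi.smul_apply, smul_eq_mul]
    rw [h, map_smul]
    simp [smul_eq_mul]

lemma Tw_apply (e : K ≃+* K) (f : (Fin 3 → K) →ₗ[K] K) (v : Fin 3 → K) :
    Tw e f (fun i => e (v i)) = e (f v) := by
  simp [Tw]

lemma Tw_smul (e : K ≃+* K) (c : K) (f : (Fin 3 → K) →ₗ[K] K) :
    Tw e (c • f) = e c • Tw e f := by
  ext v
  simp [Tw, smul_eq_mul]

lemma Tw_ne_zero (e : K ≃+* K) {f : (Fin 3 → K) →ₗ[K] K} (hf : f ≠ 0) : Tw e f ≠ 0 := by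
  intro h
  apply hf
  refine LinearMap.ext fun v => ?_
  have h1 : Tw e f (fun i => e (v i)) = 0 := by rw [h]; simp
  rw [Tw_apply] at h1
  simpa using h1

/-- Transport of vanishing along Frobenius. -/
lemma aux_transport {q : ℕ} (hq : q ≠ 0) (e : K ≃+* K) (he : ∀ x : K, e x = x ^ q)
    (f : (Fin 3 → K) →ₗ[K] K) (x : Pt K) (hx : f x.rep = 0) :
    Tw e f ((Frob q x).rep) = 0 := by
  rw [Frob, dif_neg hq]
  rw [aux_vanish_mk]
  have h : (fun i => x.rep i ^ q) = fun i => e (x.rep i) := by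
    funext i; rw [he]
  rw [h, Tw_apply, hx, map_zero]

lemma aux_transport_iter {q : ℕ} (hq : q ≠ 0) (e : K ≃+* K) (he : ∀ x : K, e x = x ^ q)
    (f : (Fin 3 → K) →ₗ[K] K) (x : Pt K) (hx : f x.rep = 0) (k : ℕ) :
    (Tw e)^[k] f (((Frob q)^[k] x).rep) = 0 := by
  induction k with
  | zero => simpa
  | succ k ih =>
    rw [Function.iterate_succ_apply', Function.iterate_succ_apply']
    exact aux_transport hq e he _ _ ih

theorem stmt_14 (p n : ℕ) [Fact p.Prime] (hn : n ≠ 0) (a : Pt (Kbar p n))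
    (h7 : (Frob (p ^ n))^[7] a = a)
    (horb : ∀ i, 0 < i → i < 7 → (Frob (p ^ n))^[i] a ≠ a)
    (h : Collinear3 a ((Frob (p ^ n))^[2] a) ((Frob (p ^ n))^[4] a)) :
    ∃ ℓ : Ln (Kbar p n), (∀ i < 7, OnLine ((Frob (p ^ n))^[i] a) ℓ) ∧
      ∀ x : Pt (Kbar p n), OnLine x ℓ → OnLine (Frob (p ^ n) x) ℓ := by
  set K := Kbar p n
  set q := p ^ n with hqdef
  have hp : p.Prime := Fact.out
  have hq : q ≠ 0 := pow_ne_zero n hp.pos.ne'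
  set e : K ≃+* K := iterateFrobeniusEquiv K p n with hedef
  have he : ∀ x : K, e x = x ^ q := fun x => iterateFrobeniusEquiv_def K p n x
  set F : Pt K → Pt K := Frob q with hFdef
  obtain ⟨f, hf0, hfa, hf2, hf4⟩ := h
  set fk : ℕ → ((Fin 3 → K) →ₗ[K] K) := fun k => (Tw e)^[k] f with hfkdef
  have hfk_ne : ∀ k, fk k ≠ 0 := by
    intro k
    induction k with
    | zero => exact hf0
    | succ k ih =>
      show (Tw e)^[k+1] f ≠ 0
      rw [Function.iterate_succ_apply']
      exact Tw_ne_zero e ih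
  -- vanishing of fk k at shifted points
  have hvan : ∀ (x : Pt K), f x.rep = 0 → ∀ k, fk k ((F^[k] x).rep) = 0 := by
    intro x hx k
    exact aux_transport_iter hq e he f x hx k
  -- key point identities
  have hF72 : F^[7] (F^[2] a) = F^[2] a := by
    rw [← Function.iterate_add_apply, show 7 + 2 = 2 + 7 from rfl,
      Function.iterate_add_apply, h7]
  have hF74 : F^[7] (F^[4] a) = F^[4] a := by
    rw [← Function.iterate_add_apply, show 7 + 4 = 4 + 7 from rfl,
      Function.iterate_add_apply, h7]
  have hF22 : F^[2] (F^[2] a) = F^[4] a := by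
    rw [← Function.iterate_add_apply]
  -- distinctness
  have hne02 : a ≠ F^[2] a := fun hcon => horb 2 (by norm_num) (by norm_num) hcon.symm
  have hne24 : F^[2] a ≠ F^[4] a := by
    intro hcon
    have h5 := congrArg (F^[5]) hcon
    rw [← Function.iterate_add_apply, ← Function.iterate_add_apply,
      show 5 + 2 = 7 from rfl, show 5 + 4 = 9 from rfl, h7,
      show (9 : ℕ) = 2 + 7 from rfl, Function.iterate_add_apply, h7] at h5
    exact hne02 h5
  -- fk 2 is proportional to f (both vanish at F² a and F⁴ a)
  obtain ⟨c₂, hc₂⟩ : ∃ c : K, fk 2 = c • f := by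
    have h1 : fk 2 ((F^[2] a).rep) = 0 := hvan a hfa 2
    have h2 : fk 2 ((F^[4] a).rep) = 0 := by
      have := hvan (F^[2] a) hf2 2
      rwa [hF22] at this
    exact aux_prop_of_two_zeros hf0 (aux_indep_of_ne hne24) hf2 hf4 h1 h2
  -- fk 7 is proportional to f (both vanish at a and F² a)
  obtain ⟨c₇, hc₇⟩ : ∃ c : K, fk 7 = c • f := by
    have h1 : fk 7 (a.rep) = 0 := by
      have := hvan a hfa 7
      rwa [h7] at this
    have h2 : fk 7 ((F^[2] a).rep) = 0 := by
      have := hvan (F^[2] a) hf2 7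
      rwa [hF72] at this
    exact aux_prop_of_two_zeros hf0 (aux_indep_of_ne hne02) hfa hf2 h1 h2
  have hc₇ne : c₇ ≠ 0 := by
    intro hcon
    apply hfk_ne 7
    rw [hc₇, hcon, zero_smul]
  -- even chain: fk (2 * j) proportional to f
  have heven : ∀ j : ℕ, ∃ c : K, fk (2 * j) = c • f := by
    intro j
    induction j with
    | zero => exact ⟨1, by simp [hfkdef]⟩
    | succ j ih =>
      obtain ⟨c, hc⟩ := ih
      refine ⟨e (e c) * c₂, ?_⟩
      have : fk (2 * (j + 1)) = (Tw e) ((Tw e) (fk (2 * j))) := by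
        show (Tw e)^[2 * (j+1)] f = _
        rw [show 2 * (j + 1) = 2 + 2 * j from by ring, Function.iterate_add_apply]
        rfl
      rw [this, hc, Tw_smul, Tw_smul]
      have h2 : (Tw e) ((Tw e) f) = fk 2 := rfl
      rw [h2, hc₂, smul_smul]
  -- combine: fk 8 both via even chain and via fk 7
  obtain ⟨C, hC⟩ := heven 4
  rw [show 2 * 4 = 8 from rfl] at hC
  have h8 : fk 8 = Tw e (fk 7) := by
    show (Tw e)^[8] f = _
    rw [show (8 : ℕ) = 1 + 7 from rfl, Function.iterate_add_apply]
    rfl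
  have h8' : fk 8 = e c₇ • fk 1 := by
    rw [h8, hc₇, Tw_smul]
    rfl
  have hec7 : e c₇ ≠ 0 := by
    intro hcon
    apply hc₇ne
    have : c₇ = e.symm (e c₇) := (e.symm_apply_apply c₇).symm
    rw [this, hcon, map_zero]
  have hCc : e c₇ • fk 1 = C • f := by rw [← h8', hC]
  have hfk1 : fk 1 = ((e c₇)⁻¹ * C) • f := by
    have h3 := congrArg (fun g : (Fin 3 → K) →ₗ[K] K => (e c₇)⁻¹ • g) hCc
    simpa [smul_smul, inv_mul_cancel₀ hec7, mul_assoc] using h3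
  set c : K := (e c₇)⁻¹ * C with hcdef
  have hcne : c ≠ 0 := by
    intro hcon
    apply hfk_ne 1
    rw [hfk1, hcon, zero_smul]
  have hTwf : Tw e f = c • f := by
    have : fk 1 = Tw e f := rfl
    rw [← this, hfk1]
  -- the line
  refine ⟨Projectivization.mk K f hf0, ?_, ?_⟩
  · -- all orbit points are on the line
    have honline : ∀ x : Pt K, f x.rep = 0 → OnLine x (Projectivization.mk K f hf0) := by
      intro x hx
      unfold OnLine
      obtain ⟨u, hu⟩ := exists_smul_eq_mk_rep K f hf0
      rw [← hu, Units.smul_def, LinearMap.smul_apply, smul_eq_mul, hx, mul_zero]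
    have hinv : ∀ x : Pt K, f x.rep = 0 → f ((Frob q x).rep) = 0 := by
      intro x hx
      have h1 : Tw e f ((Frob q x).rep) = 0 := aux_transport hq e he f x hx
      rw [hTwf, LinearMap.smul_apply, smul_eq_mul, mul_eq_zero] at h1
      tauto
    have hall : ∀ i : ℕ, f ((F^[i] a).rep) = 0 := by
      intro i
      induction i with
      | zero => simpa using hfa
      | succ i ih =>
        rw [Function.iterate_succ_apply']
        exact hinv _ ih
    intro i _
    exact honline _ (hall i)
  · -- invariance
    intro x hx
    unfold OnLine at hx ⊢
    obtain ⟨u, hu⟩ := exists_smul_eq_mk_rep K f hf0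
    rw [← hu, Units.smul_def, LinearMap.smul_apply, smul_eq_mul, mul_eq_zero] at hx ⊢
    have hfx : f x.rep = 0 := by
      rcases hx with hx | hx
      · exact absurd hx u.ne_zero
      · exact hx
    right
    have h1 : Tw e f ((Frob q x).rep) = 0 := aux_transport hq e he f x hfx
    rw [hTwf, LinearMap.smul_apply, smul_eq_mul, mul_eq_zero] at h1
    tauto
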